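/- Every noetherian, one-dimensional, normal cancellative commutative pointed monoid is a discrete valuation monoid: if A is a cancellative commutative pointed monoid that is noetherian, normal (integrally closed in its group completion A₀) and of Krull dimension one, then there exists π ∈ A such that the maximal ideal m = A ∖ A^× equals πA = {aπ : a ∈ A}, and every nonzero a ∈ A can be written as a = u·πⁿ for a unique unit u ∈ A^× and a unique natural number n. -/

import Mathlib

/-- An ideal of a commutative pointed monoid `A`. -/
def IsMIdeal {A : Type*} [CommMonoidWithZero A] (I : Set A) : Prop :=
  (0 : A) ∈ I ∧ ∀ a x : A, x ∈ I → a * x ∈ I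

/-- A prime ideal of a commutative pointed monoid. -/
def IsMPrime {A : Type*} [CommMonoidWithZero A] (p : Set A) : Prop :=
  IsMIdeal p ∧ p ≠ Set.univ ∧ ∀ a b : A, a * b ∈ p → a ∈ p ∨ b ∈ p

/-- A commutative pointed monoid is noetherian if every ascending chain of ideals
stabilizes. -/
def MonNoetherian (A : Type*) [CommMonoidWithZero A] : Prop :=
  ∀ c : ℕ → Set A, (∀ n, IsMIdeal (c n)) → (∀ n, c n ⊆ c (n + 1)) →
    ∃ N, ∀ m, N ≤ m → c m = c N

/-- A cancellative commutative pointed monoid is normal when it is integrally closed in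
its group completion: any fraction `a / s` (with `s ≠ 0`) some power of which lies in `A`
(i.e. `a ^ n = c * s ^ n` for some `c ∈ A`, `n ≥ 1`) already lies in `A`
(i.e. `s ∣ a`). -/
def MonNormal (A : Type*) [CommMonoidWithZero A] [IsCancelMulZero A] : Prop :=
  ∀ a s : A, s ≠ 0 → (∃ n : ℕ, 1 ≤ n ∧ ∃ c : A, a ^ n = c * s ^ n) → s ∣ a

section Aux
variable {A : Type*} [CommMonoidWithZero A] [IsCancelMulZero A]

/-- Elements of a proper ideal are nonunits. -/
lemma mem_ideal_not_unit {I : Set A} (hI : IsMIdeal I) (hIne : I ≠ Set.univ)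
    {y : A} (hy : y ∈ I) : ¬ IsUnit y := by
  rintro ⟨u, rfl⟩
  apply hIne
  ext z
  simp only [Set.mem_univ, iff_true]
  have := hI.2 (z * ↑u⁻¹) ↑u hy
  rwa [Units.inv_mul_cancel_right] at this

/-- From the ascending chain condition: every nonempty family of ideals has a maximal
member. -/
lemma exists_maximal_ideal_mem (hN : MonNoetherian A) (S : Set (Set A))
    (hSid : ∀ I ∈ S, IsMIdeal I) (hS : S.Nonempty) :
    ∃ I ∈ S, ∀ J ∈ S, ¬ I ⊂ J := by
  by_contra h
  push_neg at h
  choose! F hFS hFlt using h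
  obtain ⟨I₀, hI₀⟩ := hS
  set c : ℕ → Set A := fun n => F^[n] I₀ with hc
  have hstep : ∀ n, c (n + 1) = F (c n) := by
    intro n; simp [hc, Function.iterate_succ_apply']
  have hcS : ∀ n, c n ∈ S := by
    intro n; induction n with
    | zero => simpa [hc] using hI₀
    | succ k ih => rw [hstep]; exact hFS _ ih
  have hlt : ∀ n, c n ⊂ c (n + 1) := by
    intro n; rw [hstep]; exact hFlt _ (hcS n)
  obtain ⟨N, hNstab⟩ := hN c (fun n => hSid _ (hcS n)) (fun n => (hlt n).1)
  have := hlt N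
  rw [hNstab (N + 1) (Nat.le_succ N)] at this
  exact ssubset_irrefl _ this

/-- Pigeonhole: a product of at least `∑ x ∈ s, f x` factors, each divisible by some
member of `s`, is divisible by `x ^ f x` for some `x ∈ s`. -/
lemma pigeon (k : ℕ) : ∀ (f : A → ℕ) (s : Finset A) (L : List A),
    s.Nonempty → (∑ x ∈ s, f x) = k → (∀ y ∈ L, ∃ x ∈ s, x ∣ y) →
    k ≤ L.length → ∃ x ∈ s, x ^ f x ∣ L.prod := by
  classical
  induction k with
  | zero =>
    intro f s L hs hsum _ _
    obtain ⟨x, hx⟩ := hs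
    refine ⟨x, hx, ?_⟩
    have hfx : f x = 0 := by
      have := (Finset.sum_eq_zero_iff).mp hsum
      exact this x hx
    simp [hfx]
  | succ k ih =>
    intro f s L hs hsum hdvd hlen
    match L with
    | [] => simp at hlen
    | y :: L' =>
      obtain ⟨x, hxs, hxy⟩ := hdvd y (by simp)
      by_cases hfx : f x = 0
      · exact ⟨x, hxs, by simp [hfx]⟩
      · have hsplit : ∑ z ∈ s, f z = f x + ∑ z ∈ s \ {x}, f z :=
          Finset.sum_eq_add_sum_sdiff_singleton_of_mem hxs f
        have hsum' : ∑ z ∈ s, Function.update f x (f x - 1) z = k := by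
          rw [Finset.sum_update_of_mem hxs]
          omega
        have hlen' : k ≤ L'.length := by simpa using Nat.le_of_succ_le_succ hlen
        obtain ⟨x', hx's, hx'd⟩ := ih (Function.update f x (f x - 1)) s L' hs hsum'
          (fun y hy => hdvd y (List.mem_cons_of_mem _ hy)) hlen'
        by_cases hxx : x' = x
        · subst hxx
          refine ⟨x', hx's, ?_⟩
          rw [Function.update_self] at hx'd
          have hps : x' ^ f x' = x' ^ (f x' - 1) * x' := by
            conv_lhs => rw [show f x' = (f x' - 1) + 1 by omega]
            rw [pow_succ]
          rw [hps, List.prod_cons, mul_comm y]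
          exact mul_dvd_mul hx'd hxy
        · refine ⟨x', hx's, ?_⟩
          rw [Function.update_of_ne hxx] at hx'd
          rw [List.prod_cons]
          exact hx'd.mul_left y

end Aux

/-- Every noetherian, one-dimensional, normal cancellative commutative pointed monoid is
a discrete valuation monoid: there is a `π` generating the maximal ideal
`m = A ∖ A^× = πA`, and every nonzero `a ∈ A` is uniquely `u * π ^ n` with
`u` a unit and `n : ℕ`. -/
theorem noetherian_one_dimensional_normal_is_discrete_valuation
    {A : Type*} [CommMonoidWithZero A] [IsCancelMulZero A]
    (hN : MonNoetherian A) (hnormal : MonNormal A)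
    (hdim_ge : ∃ p q : Set A, IsMPrime p ∧ IsMPrime q ∧ p ⊂ q)
    (hdim_le : ∀ p q r : Set A, IsMPrime p → IsMPrime q → IsMPrime r →
      p ⊂ q → ¬ q ⊂ r) :
    ∃ π : A, {a : A | ¬ IsUnit a} = {x : A | ∃ a : A, x = a * π} ∧
      ∀ a : A, a ≠ 0 → ∃! un : Aˣ × ℕ, a = (un.1 : A) * π ^ un.2 := by
  classical
  obtain ⟨p, q, hp, hq, hpq⟩ := hdim_ge
  obtain ⟨xb, hxbq, hxbp⟩ := Set.not_subset.mp
    ((ssubset_iff_subset_not_subset.mp hpq).2)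
  have hxb0 : xb ≠ 0 := fun h => hxbp (h ▸ hp.1.1)
  have hxbnu : ¬ IsUnit xb := mem_ideal_not_unit hq.1 hq.2.1 hxbq
  haveI : Nontrivial A := ⟨⟨xb, 0, hxb0⟩⟩
  -- the maximal ideal of nonunits is prime
  have hmprime : IsMPrime {a : A | ¬ IsUnit a} := by
    refine ⟨⟨not_isUnit_zero, fun a x hx hu => hx (isUnit_of_mul_isUnit_right hu)⟩, ?_, ?_⟩
    · intro h
      have h1 : (1 : A) ∈ {a : A | ¬ IsUnit a} := h ▸ Set.mem_univ _
      exact h1 isUnit_one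
    · intro a b hab
      by_contra hc
      push_neg at hc
      obtain ⟨ha, hb⟩ := hc
      simp only [Set.mem_setOf_eq, not_not] at ha hb
      exact hab (ha.mul hb)
  -- {0} is prime
  have hzprime : IsMPrime ({0} : Set A) := by
    refine ⟨⟨rfl, ?_⟩, ?_, ?_⟩
    · rintro a x (rfl : x = 0); simp
    · intro h
      have h1 : (1 : A) ∈ ({0} : Set A) := h ▸ Set.mem_univ _
      exact one_ne_zero (Set.mem_singleton_iff.mp h1)
    · intro a b hab
      simpa using mul_eq_zero.mp (Set.mem_singleton_iff.mp hab)
  -- any prime containing a nonzero element is the maximal ideal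
  have huniq_prime : ∀ r : Set A, IsMPrime r → ∀ y ∈ r, y ≠ 0 →
      r = {a : A | ¬ IsUnit a} := by
    intro r hr y hyr hy0
    by_contra hne
    have hsub : r ⊆ {a : A | ¬ IsUnit a} :=
      fun z hz => mem_ideal_not_unit hr.1 hr.2.1 hz
    have h1 : ({0} : Set A) ⊂ r := by
      rw [ssubset_iff_subset_not_subset]
      constructor
      · rintro z (rfl : z = 0); exact hr.1.1
      · intro h; exact hy0 (Set.mem_singleton_iff.mp (h hyr))
    have h2 : r ⊂ {a : A | ¬ IsUnit a} :=
      (Set.ssubset_iff_subset_ne).mpr ⟨hsub, hne⟩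
    exact hdim_le _ _ _ hzprime hr hmprime h1 h2
  -- radical: some power of every nonunit is divisible by xb
  have hrad : ∀ x : A, ¬ IsUnit x → ∃ n : ℕ, 1 ≤ n ∧ xb ∣ x ^ n := by
    intro x hx
    by_contra hcon
    push_neg at hcon
    set S : Set (Set A) :=
      {I | IsMIdeal I ∧ {y : A | xb ∣ y} ⊆ I ∧ ∀ n : ℕ, 1 ≤ n → x ^ n ∉ I} with hSdef
    have hSid : ∀ I ∈ S, IsMIdeal I := fun I hI => hI.1
    have hI0 : {y : A | xb ∣ y} ∈ S := by
      refine ⟨⟨dvd_zero xb, fun a z hz => hz.mul_left a⟩, subset_rfl, ?_⟩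
      intro n hn hmem
      exact hcon n hn hmem
    obtain ⟨Q, hQS, hQmax⟩ := exists_maximal_ideal_mem hN S hSid ⟨_, hI0⟩
    obtain ⟨hQid, hQsub, hQpow⟩ := hQS
    have hQne : Q ≠ Set.univ := by
      intro h
      exact hQpow 1 le_rfl (h ▸ Set.mem_univ _)
    -- auxiliary: if u ∉ Q then some power of x is a multiple of u
    have hstep : ∀ u : A, u ∉ Q → ∃ kk : ℕ, 1 ≤ kk ∧ ∃ cc : A, x ^ kk = cc * u := by
      intro u hu
      set J : Set A := Q ∪ {y | ∃ cc : A, y = cc * u} with hJdef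
      have hJid : IsMIdeal J := by
        refine ⟨Or.inl hQid.1, ?_⟩
        rintro a z (hz | ⟨cc, rfl⟩)
        · exact Or.inl (hQid.2 a z hz)
        · exact Or.inr ⟨a * cc, (mul_assoc a cc u).symm⟩
      have hQJ : Q ⊂ J := by
        rw [ssubset_iff_subset_not_subset]
        refine ⟨Set.subset_union_left, fun h => hu (h (Or.inr ⟨1, (one_mul u).symm⟩))⟩
      have hJnS : J ∉ S := fun hJS => hQmax J hJS hQJ
      have : ¬ ∀ n : ℕ, 1 ≤ n → x ^ n ∉ J := by
        intro hall
        exact hJnS ⟨hJid, fun z hz => Or.inl (hQsub hz), hall⟩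
      push_neg at this
      obtain ⟨kk, hkk1, hkkJ⟩ := this
      rcases hkkJ with hkkQ | ⟨cc, hcc⟩
      · exact absurd hkkQ (hQpow kk hkk1)
      · exact ⟨kk, hkk1, cc, hcc⟩
    have hQprime : IsMPrime Q := by
      refine ⟨hQid, hQne, ?_⟩
      intro u v huv
      by_contra hc
      push_neg at hc
      obtain ⟨hu, hv⟩ := hc
      obtain ⟨kk, hkk1, cc, hcc⟩ := hstep u hu
      obtain ⟨ll, hll1, dd, hdd⟩ := hstep v hv
      have hmem : x ^ (kk + ll) ∈ Q := by
        have : x ^ (kk + ll) = (cc * dd) * (u * v) := by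
          rw [pow_add, hcc, hdd]; ac_rfl
        rw [this]
        exact hQid.2 _ _ huv
      exact hQpow (kk + ll) (by omega) hmem
    have hQm : Q = {a : A | ¬ IsUnit a} :=
      huniq_prime Q hQprime xb (hQsub (dvd_refl xb)) hxb0
    have hxQ : x ∈ Q := by rw [hQm]; exact hx
    exact hQpow 1 le_rfl (by rwa [pow_one])
  -- the maximal ideal is finitely generated
  have hfg : ∃ s₀ : Finset A, (∀ x ∈ s₀, ¬ IsUnit x) ∧
      ∀ y : A, ¬ IsUnit y ↔ (y = 0 ∨ ∃ x ∈ s₀, x ∣ y) := by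
    set S : Set (Set A) := {I | ∃ s : Finset A, (∀ x ∈ s, ¬ IsUnit x) ∧
      I = {y : A | y = 0 ∨ ∃ x ∈ s, x ∣ y}} with hSdef
    have hSid : ∀ I ∈ S, IsMIdeal I := by
      rintro I ⟨s, hs, rfl⟩
      refine ⟨Or.inl rfl, ?_⟩
      rintro a z (rfl | ⟨x, hxs, hxz⟩)
      · exact Or.inl (mul_zero a)
      · exact Or.inr ⟨x, hxs, hxz.mul_left a⟩
    have hSne : S.Nonempty := ⟨_, (∅ : Finset A), by simp, rfl⟩
    obtain ⟨I, hIS, hmax⟩ := exists_maximal_ideal_mem hN S hSid hSne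
    obtain ⟨s₀, hs₀, rfl⟩ := hIS
    refine ⟨s₀, hs₀, ?_⟩
    have hIsub : ∀ y : A, (y = 0 ∨ ∃ x ∈ s₀, x ∣ y) → ¬ IsUnit y := by
      rintro y (rfl | ⟨x, hxs, c, rfl⟩)
      · exact not_isUnit_zero
      · exact fun hu => hs₀ x hxs (isUnit_of_mul_isUnit_left hu)
    have hmsub : ∀ y : A, ¬ IsUnit y → (y = 0 ∨ ∃ x ∈ s₀, x ∣ y) := by
      by_contra hcc
      push_neg at hcc
      obtain ⟨z, hznu, hz0, hzd⟩ := hcc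
      have hznu' : ∀ x ∈ insert z s₀, ¬ IsUnit x := by
        intro x hx
        rcases Finset.mem_insert.mp hx with rfl | hx
        · exact hznu
        · exact hs₀ x hx
      have hJS : {y : A | y = 0 ∨ ∃ x ∈ insert z s₀, x ∣ y} ∈ S :=
        ⟨insert z s₀, hznu', rfl⟩
      apply hmax _ hJS
      rw [ssubset_iff_subset_not_subset]
      constructor
      · rintro w (rfl | ⟨x, hx, hd⟩)
        · exact Or.inl rfl
        · exact Or.inr ⟨x, Finset.mem_insert_of_mem hx, hd⟩
      · intro hsub
        rcases hsub (Or.inr ⟨z, Finset.mem_insert_self z s₀, dvd_refl z⟩) with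
          h0 | ⟨x, hx, hd⟩
        · exact hz0 h0
        · exact hzd x hx hd
    exact fun y => ⟨hmsub y, hIsub y⟩
  obtain ⟨s₀, hs₀nu, hdesc⟩ := hfg
  have hrs : ∀ x ∈ s₀, ∃ n : ℕ, 1 ≤ n ∧ xb ∣ x ^ n := fun x hx => hrad x (hs₀nu x hx)
  choose! nf hnf1 hnf2 using hrs
  have hs₀ne : s₀.Nonempty := by
    rcases (hdesc xb).mp hxbnu with h | ⟨x, hx, _⟩
    · exact absurd h hxb0
    · exact ⟨x, hx⟩
  -- products of enough nonunits are divisible by xb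
  have hQex : ∃ n : ℕ, ∀ L : List A, (∀ y ∈ L, ¬ IsUnit y) → n ≤ L.length →
      xb ∣ L.prod := by
    refine ⟨∑ x ∈ s₀, nf x, ?_⟩
    intro L hL hlen
    by_cases h0 : (0 : A) ∈ L
    · rw [List.prod_eq_zero h0]; exact dvd_zero xb
    · have hdvd : ∀ y ∈ L, ∃ x ∈ s₀, x ∣ y := by
        intro y hy
        rcases (hdesc y).mp (hL y hy) with rfl | h
        · exact absurd hy h0
        · exact h
      obtain ⟨x, hxs, hxd⟩ := pigeon _ nf s₀ L hs₀ne rfl hdvd hlen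
      exact (hnf2 x hxs).trans hxd
  set N := Nat.find hQex with hNdef
  have hQN := Nat.find_spec hQex
  have hN1 : 1 ≤ N := by
    by_contra hh
    have hN0 : N = 0 := by omega
    have := hQN [] (by simp) (by simp only [List.length_nil]; omega)
    simp only [List.prod_nil] at this
    exact hxbnu (isUnit_of_dvd_one this)
  have hmin : ¬ ∀ L : List A, (∀ y ∈ L, ¬ IsUnit y) → N - 1 ≤ L.length →
      xb ∣ L.prod := Nat.find_min hQex (by omega)
  push_neg at hmin
  obtain ⟨L₀, hL₀nu, hL₀len, hL₀nd⟩ := hmin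
  set b := L₀.prod with hbdef
  have hb0 : b ≠ 0 := fun h => hL₀nd (h ▸ dvd_zero xb)
  have hbmul : ∀ x : A, ¬ IsUnit x → xb ∣ x * b := by
    intro x hx
    have hall : ∀ y ∈ x :: L₀, ¬ IsUnit y := by
      intro y hy
      rcases List.mem_cons.mp hy with rfl | hy
      · exact hx
      · exact hL₀nu y hy
    have hlen : N ≤ (x :: L₀).length := by
      simp only [List.length_cons]
      omega
    have := hQN (x :: L₀) hall hlen
    simpa using this
  have hcw : ∀ x : A, ¬ IsUnit x → ∃ e : A, x * b = xb * e := fun x hx => hbmul x hx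
  choose! cf hcf using hcw
  by_cases hcase : ∃ x₀ : A, ¬ IsUnit x₀ ∧ IsUnit (cf x₀)
  · obtain ⟨x₀, hx₀nu, hx₀u⟩ := hcase
    obtain ⟨u, hu⟩ := hx₀u
    have heq : x₀ * b = xb * ↑u := by rw [hu]; exact hcf x₀ hx₀nu
    have hx₀0 : x₀ ≠ 0 := by
      rintro rfl
      rw [zero_mul] at heq
      rcases mul_eq_zero.mp heq.symm with h | h
      · exact hxb0 h
      · exact u.ne_zero h
    have hxbeq : xb = x₀ * b * ↑u⁻¹ := by
      calc xb = xb * ↑u * ↑u⁻¹ := by rw [Units.mul_inv_cancel_right]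
      _ = x₀ * b * ↑u⁻¹ := by rw [heq]
    have hdiv : ∀ x : A, ¬ IsUnit x → ∃ a' : A, x = a' * x₀ := by
      intro x hx
      have h1 : x * b = xb * cf x := hcf x hx
      refine ⟨↑u⁻¹ * cf x, ?_⟩
      have h2 : x * b = (↑u⁻¹ * cf x * x₀) * b := by
        rw [h1, hxbeq]; ac_rfl
      exact mul_right_cancel₀ hb0 h2
    -- part 1
    have hpart1 : {a : A | ¬ IsUnit a} = {x : A | ∃ a : A, x = a * x₀} := by
      ext z
      simp only [Set.mem_setOf_eq]
      constructor
      · exact hdiv z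
      · rintro ⟨a', rfl⟩ hu'
        exact hx₀nu (isUnit_of_mul_isUnit_right hu')
    -- existence of factorizations
    have hex : ∀ a : A, a ≠ 0 → ∃ un : Aˣ × ℕ, a = (un.1 : A) * x₀ ^ un.2 := by
      by_contra hbad
      push_neg at hbad
      obtain ⟨a0, ha00, ha0n⟩ := hbad
      set T : Set A := {a | a ≠ 0 ∧ ∀ un : Aˣ × ℕ, a ≠ (un.1 : A) * x₀ ^ un.2} with hT
      set S : Set (Set A) := {I | ∃ a ∈ T, I = {y : A | a ∣ y}} with hS2
      have hSid : ∀ I ∈ S, IsMIdeal I := by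
        rintro I ⟨a, ha, rfl⟩
        exact ⟨dvd_zero a, fun c z hz => hz.mul_left c⟩
      have hSne : S.Nonempty := ⟨_, a0, ⟨ha00, ha0n⟩, rfl⟩
      obtain ⟨I, hIS, hmax⟩ := exists_maximal_ideal_mem hN S hSid hSne
      obtain ⟨a, ⟨ha0, han⟩, rfl⟩ := hIS
      have hanu : ¬ IsUnit a := by
        intro hu'
        exact han (hu'.unit, 0) (by simp)
      obtain ⟨c, hc⟩ := hdiv a hanu
      have hc0 : c ≠ 0 := by
        rintro rfl
        rw [zero_mul] at hc
        exact ha0 hc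
      have hcT : c ∈ T := by
        refine ⟨hc0, ?_⟩
        rintro ⟨v, n⟩ hv
        refine han (v, n + 1) ?_
        simp only at hv ⊢
        rw [hc, hv, pow_succ]
        ac_rfl
      apply hmax {y : A | c ∣ y} ⟨c, hcT, rfl⟩
      rw [ssubset_iff_subset_not_subset]
      constructor
      · intro z hz
        exact dvd_trans ⟨x₀, hc⟩ hz
      · intro hsub
        obtain ⟨t, ht⟩ := hsub (dvd_refl c)
        have h1 : 1 * c = (x₀ * t) * c := by
          rw [one_mul]
          calc c = a * t := ht
          _ = (c * x₀) * t := by rw [hc]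
          _ = (x₀ * t) * c := by ac_rfl
        have : (1 : A) = x₀ * t := mul_right_cancel₀ hc0 h1
        exact hx₀nu (IsUnit.of_mul_eq_one (a := x₀) t this.symm)
    -- uniqueness helper
    have huniq1 : ∀ (u1 v1 : Aˣ) (n m : ℕ), n ≤ m →
        (u1 : A) * x₀ ^ n = (v1 : A) * x₀ ^ m → u1 = v1 ∧ n = m := by
      intro u1 v1 n m hnm heq2
      obtain ⟨t, rfl⟩ := Nat.exists_eq_add_of_le hnm
      have h2 : (u1 : A) * x₀ ^ n = ((v1 : A) * x₀ ^ t) * x₀ ^ n := by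
        rw [heq2, pow_add]; ac_rfl
      have h3 : (u1 : A) = (v1 : A) * x₀ ^ t :=
        mul_right_cancel₀ (pow_ne_zero n hx₀0) h2
      have ht0 : t = 0 := by
        by_contra htne
        have hd : x₀ ∣ (u1 : A) := by
          have : x₀ ^ t ∣ (u1 : A) := ⟨↑v1, by rw [h3]; ac_rfl⟩
          exact dvd_trans (dvd_pow_self x₀ htne) this
        exact hx₀nu (isUnit_of_dvd_unit hd u1.isUnit)
      subst ht0
      rw [pow_zero, mul_one] at h3
      exact ⟨Units.ext h3, rfl⟩
    refine ⟨x₀, hpart1, ?_⟩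
    intro a ha
    obtain ⟨⟨u1, n1⟩, hun⟩ := hex a ha
    refine ⟨(u1, n1), hun, ?_⟩
    rintro ⟨v1, m1⟩ hv
    simp only at hv hun
    have heq3 : (v1 : A) * x₀ ^ m1 = (u1 : A) * x₀ ^ n1 := by rw [← hv, ← hun]
    rcases le_total m1 n1 with h | h
    · obtain ⟨h1, h2⟩ := huniq1 v1 u1 m1 n1 h heq3
      rw [h1, h2]
    · obtain ⟨h1, h2⟩ := huniq1 u1 v1 n1 m1 h heq3.symm
      rw [h1, h2]
  · -- impossible case: b/xb would be almost integral, hence integral, hence xb ∣ b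
    exfalso
    push_neg at hcase
    set d : ℕ → A := fun n => cf^[n] xb with hd
    have hdstep : ∀ n, d (n + 1) = cf (d n) := by
      intro n; simp [hd, Function.iterate_succ_apply']
    have hdnu : ∀ n, ¬ IsUnit (d n) := by
      intro n; induction n with
      | zero => simpa [hd] using hxbnu
      | succ k ih => rw [hdstep]; exact hcase _ ih
    have hrel : ∀ n, d n * b = xb * d (n + 1) := by
      intro n; rw [hdstep]; exact hcf (d n) (hdnu n)
    have hdpow : ∀ n, xb ^ n * d n = b ^ n * xb := by
      intro n; induction n with
      | zero => simp [hd]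
      | succ k ih =>
        calc xb ^ (k + 1) * d (k + 1) = xb ^ k * (xb * d (k + 1)) := by
              rw [pow_succ]; ac_rfl
        _ = xb ^ k * (d k * b) := by rw [hrel k]
        _ = b * (xb ^ k * d k) := by ac_rfl
        _ = b * (b ^ k * xb) := by rw [ih]
        _ = b ^ (k + 1) * xb := by rw [pow_succ]; ac_rfl
    have hid : ∀ n : ℕ, IsMIdeal {y : A | ∃ k ≤ n, d k ∣ y} := by
      intro n
      refine ⟨⟨0, Nat.zero_le n, dvd_zero _⟩, ?_⟩
      rintro a z ⟨k, hk, hdv⟩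
      exact ⟨k, hk, hdv.mul_left a⟩
    obtain ⟨K, hK⟩ := hN (fun n => {y : A | ∃ k ≤ n, d k ∣ y}) hid
      (by rintro n z ⟨k, hk, hdv⟩; exact ⟨k, Nat.le_succ_of_le hk, hdv⟩)
    have hdK : d (K + 1) ∈ {y : A | ∃ k ≤ K, d k ∣ y} := by
      have := hK (K + 1) (Nat.le_succ K)
      rw [← this]
      exact ⟨K + 1, le_rfl, dvd_rfl⟩
    obtain ⟨k, hkK, e, he⟩ := hdK
    set n' := K + 1 - k with hn'
    have hkn : n' + k = K + 1 := by omega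
    have e1 : xb ^ (K + 1) * d (K + 1) = b ^ (K + 1) * xb := hdpow (K + 1)
    have e2 : xb ^ k * d k = b ^ k * xb := hdpow k
    have e3 : (xb ^ n' * e) * (b ^ k * xb) = (b ^ n') * (b ^ k * xb) := by
      calc (xb ^ n' * e) * (b ^ k * xb) = (xb ^ n' * e) * (xb ^ k * d k) := by rw [e2]
      _ = (xb ^ n' * xb ^ k) * (d k * e) := by ac_rfl
      _ = xb ^ (K + 1) * d (K + 1) := by rw [← pow_add, hkn, ← he]
      _ = b ^ (K + 1) * xb := e1
      _ = (b ^ n' * b ^ k) * xb := by rw [← pow_add, hkn]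
      _ = (b ^ n') * (b ^ k * xb) := by ac_rfl
    have e4 : xb ^ n' * e = b ^ n' :=
      mul_right_cancel₀ (mul_ne_zero (pow_ne_zero _ hb0) hxb0) e3
    have : xb ∣ b := hnormal b xb hxb0 ⟨n', by omega, e, by rw [← e4]; ac_rfl⟩
    exact hL₀nd this
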